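/- The kernel of τ₁ has dimension (7n² − n)/2; precisely, the subspace of pairs (B_S, B_C), where B_S is a bilinear form on V and B_C is a symmetric bilinear form on V, satisfying for all X, Y ∈ V: (i) B_S(J X, P_h Y) − B_S(P_h Y, J X) − B_S(J Y, P_h X) + B_S(P_h X, J Y) = 0; (ii) B_S(X, S) = 0; (iii) B_S(X, J Y) + B_C(X, J Y) = 0; (iv) B_S(C, P_h X) − B_C(S, J X) + B_C(P_h X, C) = 0, has dimension (7n² − n)/2. -/

import Mathlib

set_option synthInstance.maxHeartbeats 1000000
set_option maxHeartbeats 1000000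

noncomputable section

/-- The pointwise model `V = (Fin n → ℝ) × (Fin n → ℝ)` of the double tangent space
`T_x(TM)` for a spray on an `n`-dimensional manifold, in an adapted basis. -/
abbrev V (n : ℕ) : Type := (Fin n → ℝ) × (Fin n → ℝ)

/-- The vertical endomorphism `J (x, y) = (0, x)`. -/
def Jmap (n : ℕ) : V n →ₗ[ℝ] V n where
  toFun p := (0, p.1)
  map_add' a b := by simp
  map_smul' c a := by simp

/-- The horizontal projector `P_h (x, y) = (x, 0)`. -/
def Ph (n : ℕ) : V n →ₗ[ℝ] V n where
  toFun p := (p.1, 0)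
  map_add' a b := by simp
  map_smul' c a := by simp

/-- The `j`-th standard basis vector of `Fin n → ℝ`, indexed by `1 ≤ j ≤ n`
(zero if `j` is out of range). -/
def dlt (n j : ℕ) : Fin n → ℝ := fun i => if (i : ℕ) + 1 = j then 1 else 0

/-- The horizontal basis vector `h_j`, `1 ≤ j ≤ n`. -/
def hvec (n j : ℕ) : V n := (dlt n j, 0)

/-- The vertical basis vector `v_j`, `1 ≤ j ≤ n`. -/
def vvec (n j : ℕ) : V n := (0, dlt n j)

/-- The spray vector `S = h_n`. -/
def Svec (n : ℕ) : V n := hvec n n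

/-- The Liouville vector `C = v_n = J S`. -/
def Cvec (n : ℕ) : V n := vvec n n

/-- Bilinear forms on `V n`. -/
abbrev Bil (n : ℕ) := V n →ₗ[ℝ] V n →ₗ[ℝ] ℝ

/-- Trilinear forms on `V n` (bundled). -/
abbrev Tri (n : ℕ) := V n →ₗ[ℝ] V n →ₗ[ℝ] V n →ₗ[ℝ] ℝ

/-- The kernel of `τ₁`: pairs `(B_S, B_C)` with `B_S` bilinear and `B_C` symmetric
bilinear satisfying the four equations `τ¹_S = τ²_S = τ¹_{SC} = τ²_{SC} = 0`. -/
def kerTau1 (n : ℕ) : Submodule ℝ (Bil n × Bil n) where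
  carrier := {B | (∀ X Y, B.2 X Y = B.2 Y X) ∧
    (∀ X Y, B.1 (Jmap n X) (Ph n Y) - B.1 (Ph n Y) (Jmap n X)
      - B.1 (Jmap n Y) (Ph n X) + B.1 (Ph n X) (Jmap n Y) = 0) ∧
    (∀ X, B.1 X (Svec n) = 0) ∧
    (∀ X Y, B.1 X (Jmap n Y) + B.2 X (Jmap n Y) = 0) ∧
    (∀ X, B.1 (Cvec n) (Ph n X) - B.2 (Svec n) (Jmap n X) + B.2 (Ph n X) (Cvec n) = 0)}
  add_mem' := by
    rintro a b ⟨ha0, ha1, ha2, ha3, ha4⟩ ⟨hb0, hb1, hb2, hb3, hb4⟩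
    refine ⟨fun X Y => ?_, fun X Y => ?_, fun X => ?_, fun X Y => ?_, fun X => ?_⟩ <;>
      simp only [Prod.fst_add, Prod.snd_add, LinearMap.add_apply]
    · linear_combination ha0 X Y + hb0 X Y
    · linear_combination ha1 X Y + hb1 X Y
    · linear_combination ha2 X + hb2 X
    · linear_combination ha3 X Y + hb3 X Y
    · linear_combination ha4 X + hb4 X
  zero_mem' := ⟨fun X Y => by simp, fun X Y => by simp, fun X => by simp,
    fun X Y => by simp, fun X => by simp⟩
  smul_mem' := by
    rintro c a ⟨ha0, ha1, ha2, ha3, ha4⟩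
    refine ⟨fun X Y => ?_, fun X Y => ?_, fun X => ?_, fun X Y => ?_, fun X => ?_⟩ <;>
      simp only [Prod.smul_fst, Prod.smul_snd, LinearMap.smul_apply, smul_eq_mul]
    · linear_combination c * ha0 X Y
    · linear_combination c * ha1 X Y
    · linear_combination c * ha2 X
    · linear_combination c * ha3 X Y
    · linear_combination c * ha4 X

namespace KTaux

variable (n : ℕ)

def bV : Module.Basis (Fin n ⊕ Fin n) ℝ (V n) := (Pi.basisFun ℝ (Fin n)).prod (Pi.basisFun ℝ (Fin n))

lemma bV_inl (i : Fin n) : bV n (Sum.inl i) = (Pi.single i 1, 0) := by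
  unfold bV
  apply Prod.ext
  · rw [Module.Basis.prod_apply_inl_fst]; simp
  · rw [Module.Basis.prod_apply_inl_snd]
lemma bV_inr (i : Fin n) : bV n (Sum.inr i) = (0, Pi.single i 1) := by
  unfold bV
  apply Prod.ext
  · rw [Module.Basis.prod_apply_inr_fst]
  · rw [Module.Basis.prod_apply_inr_snd]; simp

def eV : V n →ₗ[ℝ] (Fin n ⊕ Fin n → ℝ) where
  toFun p := Sum.elim p.1 p.2
  map_add' a b := by funext x; cases x <;> simp
  map_smul' c a := by funext x; cases x <;> simp

lemma eV_bV (a : Fin n ⊕ Fin n) : eV n (bV n a) = Pi.single a 1 := by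
  cases a with
  | inl i =>
    rw [bV_inl]; funext b
    cases b with
    | inl j => simp [eV, Pi.single_apply]
    | inr j => simp [eV, Pi.single_apply]
  | inr i =>
    rw [bV_inr]; funext b
    cases b with
    | inl j => simp [eV, Pi.single_apply]
    | inr j => simp [eV, Pi.single_apply]

def mkBil (M : Matrix (Fin n ⊕ Fin n) (Fin n ⊕ Fin n) ℝ) : Bil n :=
  (Matrix.toLinearMap₂' ℝ M).compl₁₂ (eV n) (eV n)

@[simp] lemma mkBil_bV (M : Matrix (Fin n ⊕ Fin n) (Fin n ⊕ Fin n) ℝ) (a b) :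
    mkBil n M (bV n a) (bV n b) = M a b := by
  simp only [mkBil, LinearMap.compl₁₂_apply, eV_bV]
  exact Matrix.toLinearMap₂'Aux_single (RingHom.id ℝ) (RingHom.id ℝ) M a b

lemma bil_ext {B B' : Bil n} (h : ∀ a b, B (bV n a) (bV n b) = B' (bV n a) (bV n b)) :
    B = B' :=
  (bV n).ext fun a => (bV n).ext fun b => h a b

@[simp] lemma J_bV_inl (i : Fin n) : Jmap n (bV n (Sum.inl i)) = bV n (Sum.inr i) := by
  rw [bV_inl, bV_inr]; rfl
@[simp] lemma J_bV_inr (i : Fin n) : Jmap n (bV n (Sum.inr i)) = 0 := by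
  rw [bV_inr]; rfl
@[simp] lemma Ph_bV_inl (i : Fin n) : Ph n (bV n (Sum.inl i)) = bV n (Sum.inl i) := by
  rw [bV_inl]; rfl
@[simp] lemma Ph_bV_inr (i : Fin n) : Ph n (bV n (Sum.inr i)) = 0 := by
  rw [bV_inr]; rfl

variable {m : ℕ}

lemma dlt_last (m : ℕ) : dlt (m + 1) (m + 1) = Pi.single (Fin.last m) 1 := by
  funext k
  simp [dlt, Pi.single_apply, Fin.ext_iff, Fin.val_last]

lemma Svec_eq (m : ℕ) : Svec (m + 1) = bV (m + 1) (Sum.inl (Fin.last m)) := by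
  rw [bV_inl]; exact Prod.ext (dlt_last m) rfl
lemma Cvec_eq (m : ℕ) : Cvec (m + 1) = bV (m + 1) (Sum.inr (Fin.last m)) := by
  rw [bV_inr]; exact Prod.ext rfl (dlt_last m)


abbrev Idx (k : ℕ) := {p : Fin k × Fin k // p.1 ≤ p.2}

abbrev Pspace (m : ℕ) : Type :=
  (Fin (m+1) → Fin (m+1) → ℝ) × (Fin (m+1) → Fin m → ℝ) × (Idx m → ℝ) ×
    (Idx (m+1) → ℝ) × (Idx (m+1) → ℝ)

def symf {k : ℕ} (t : Idx k → ℝ) (i j : Fin k) : ℝ :=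
  if h : (i : ℕ) ≤ (j : ℕ) then t ⟨(i, j), h⟩ else t ⟨(j, i), Nat.le_of_not_le h⟩

lemma symf_symm {k : ℕ} (t : Idx k → ℝ) (i j : Fin k) : symf t i j = symf t j i := by
  unfold symf
  split_ifs with h1 h2 h2
  · have : i = j := Fin.ext (Nat.le_antisymm h1 h2)
    subst this; rfl
  · rfl
  · rfl
  · omega

def wfn (m : ℕ) (h : Fin (m+1) → Fin (m+1) → ℝ) (s : Idx m → ℝ) (i j : Fin (m+1)) : ℝ :=
  if hj : (j : ℕ) < m then
    if hi : (i : ℕ) < m then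
      if hij : (i : ℕ) ≤ (j : ℕ) then s ⟨(⟨i, hi⟩, ⟨j, hj⟩), hij⟩
      else s ⟨(⟨j, hj⟩, ⟨i, hi⟩), Nat.le_of_not_le hij⟩ + h j i - h i j
    else h j i - h i j
  else 0

lemma wfn_skew (m : ℕ) (h : Fin (m+1) → Fin (m+1) → ℝ) (s : Idx m → ℝ) (i j : Fin (m+1)) :
    wfn m h s i j - wfn m h s j i = h j i - h i j := by
  have hi1 := i.isLt
  have hj1 := j.isLt
  unfold wfn
  split_ifs
  all_goals try ring
  all_goals try (exfalso; omega)
  all_goals (have hij : i = j := Fin.ext (by omega); subst hij; ring)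

variable {m : ℕ}

def MS (p : Pspace m) : Matrix (Fin (m+1) ⊕ Fin (m+1)) (Fin (m+1) ⊕ Fin (m+1)) ℝ :=
  Matrix.of fun a b =>
    match a, b with
    | Sum.inl i, Sum.inl j => if hj : (j : ℕ) < m then p.2.1 i ⟨j, hj⟩ else 0
    | Sum.inl i, Sum.inr j => p.1 i j
    | Sum.inr i, Sum.inl j => wfn m p.1 p.2.2.1 i j
    | Sum.inr i, Sum.inr j => symf p.2.2.2.1 i j

def MC (p : Pspace m) : Matrix (Fin (m+1) ⊕ Fin (m+1)) (Fin (m+1) ⊕ Fin (m+1)) ℝ :=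
  Matrix.of fun a b =>
    match a, b with
    | Sum.inl i, Sum.inl j => symf p.2.2.2.2 i j
    | Sum.inl i, Sum.inr j => - p.1 i j
    | Sum.inr i, Sum.inl j => - p.1 j i
    | Sum.inr i, Sum.inr j => - symf p.2.2.2.1 i j

lemma mem_ker (p : Pspace m) :
    (mkBil (m+1) (MS p), mkBil (m+1) (MC p)) ∈ kerTau1 (m+1) := by
  set B1 := mkBil (m+1) (MS p) with hB1
  set B2 := mkBil (m+1) (MC p) with hB2
  refine ⟨?_, ?_, ?_, ?_, ?_⟩
  · -- symmetry of B2
    have key : B2 = B2.flip := by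
      apply bil_ext
      intro a b
      rw [LinearMap.flip_apply, hB2, mkBil_bV, mkBil_bV]
      cases a <;> cases b <;> simp [MC, symf_symm]
    intro X Y
    conv_lhs => rw [key]
    rfl
  · -- condition (i)
    intro X Y
    have key : B1.compl₁₂ (Jmap (m+1)) (Ph (m+1)) - (B1.compl₁₂ (Ph (m+1)) (Jmap (m+1))).flip
        - (B1.compl₁₂ (Jmap (m+1)) (Ph (m+1))).flip + B1.compl₁₂ (Ph (m+1)) (Jmap (m+1))
        = 0 := by
      apply bil_ext
      intro a b
      simp only [LinearMap.add_apply, LinearMap.sub_apply, LinearMap.flip_apply,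
        LinearMap.compl₁₂_apply, LinearMap.zero_apply]
      cases a with
      | inl i =>
        cases b with
        | inl j =>
          rw [J_bV_inl, J_bV_inl, Ph_bV_inl, Ph_bV_inl, hB1, mkBil_bV, mkBil_bV, mkBil_bV,
            mkBil_bV]
          show wfn m p.1 p.2.2.1 i j - p.1 j i - wfn m p.1 p.2.2.1 j i + p.1 i j = 0
          have := wfn_skew m p.1 p.2.2.1 i j
          linarith
        | inr j => simp
      | inr i => cases b <;> simp
    have h2 := LinearMap.congr_fun (LinearMap.congr_fun key X) Y
    simp only [LinearMap.add_apply, LinearMap.sub_apply, LinearMap.flip_apply,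
      LinearMap.compl₁₂_apply, LinearMap.zero_apply] at h2
    linarith
  · -- condition (ii)
    intro X
    have key : B1.flip (Svec (m+1)) = 0 := by
      apply (bV (m+1)).ext
      intro a
      rw [LinearMap.flip_apply, Svec_eq, hB1, mkBil_bV]
      cases a with
      | inl i =>
        show (if hj : ((Fin.last m : Fin (m+1)) : ℕ) < m then p.2.1 i ⟨_, hj⟩ else 0) = _
        rw [dif_neg (by simp)]
        simp
      | inr i =>
        show wfn m p.1 p.2.2.1 i (Fin.last m) = _
        rw [wfn, dif_neg (by simp)]
        simp
    exact LinearMap.congr_fun key X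
  · -- condition (iii)
    intro X Y
    have key : B1.compl₁₂ LinearMap.id (Jmap (m+1)) + B2.compl₁₂ LinearMap.id (Jmap (m+1))
        = 0 := by
      apply bil_ext
      intro a b
      simp only [LinearMap.add_apply, LinearMap.compl₁₂_apply, LinearMap.id_coe, id_eq,
        LinearMap.zero_apply]
      cases b with
      | inl j =>
        rw [J_bV_inl, hB1, hB2, mkBil_bV, mkBil_bV]
        cases a with
        | inl i => show p.1 i j + - p.1 i j = 0; ring
        | inr i => show symf p.2.2.2.1 i j + - symf p.2.2.2.1 i j = 0; ring
      | inr j => simp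
    have h2 := LinearMap.congr_fun (LinearMap.congr_fun key X) Y
    simpa only [LinearMap.add_apply, LinearMap.compl₁₂_apply, LinearMap.id_coe, id_eq,
      LinearMap.zero_apply] using h2
  · -- condition (iv)
    intro X
    have key : (B1 (Cvec (m+1))).comp (Ph (m+1)) - (B2 (Svec (m+1))).comp (Jmap (m+1))
        + (B2.flip (Cvec (m+1))).comp (Ph (m+1)) = 0 := by
      apply (bV (m+1)).ext
      intro a
      simp only [LinearMap.add_apply, LinearMap.sub_apply, LinearMap.comp_apply,
        LinearMap.flip_apply, LinearMap.zero_apply]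
      cases a with
      | inl i =>
        rw [Ph_bV_inl, J_bV_inl, Cvec_eq, Svec_eq, hB1, hB2, mkBil_bV, mkBil_bV, mkBil_bV]
        show wfn m p.1 p.2.2.1 (Fin.last m) i - (- p.1 (Fin.last m) i) + (- p.1 i (Fin.last m))
          = 0
        have hi1 := i.isLt
        by_cases h1 : (i : ℕ) < m
        · rw [wfn, dif_pos h1, dif_neg (by simp)]
          ring
        · have hil : i = Fin.last m := Fin.ext (by simp only [Fin.val_last]; omega)
          subst hil
          rw [wfn, dif_neg (by simp)]
          ring
      | inr i =>
        rw [Ph_bV_inr, J_bV_inr]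
        simp
    exact LinearMap.congr_fun key X

def coordFun (B : Bil (m+1) × Bil (m+1)) : Pspace m :=
  (fun i j => B.1 (bV (m+1) (Sum.inl i)) (bV (m+1) (Sum.inr j)),
   fun i j => B.1 (bV (m+1) (Sum.inl i)) (bV (m+1) (Sum.inl j.castSucc)),
   fun q => B.1 (bV (m+1) (Sum.inr q.1.1.castSucc)) (bV (m+1) (Sum.inl q.1.2.castSucc)),
   fun q => B.1 (bV (m+1) (Sum.inr q.1.1)) (bV (m+1) (Sum.inr q.1.2)),
   fun q => B.2 (bV (m+1) (Sum.inl q.1.1)) (bV (m+1) (Sum.inl q.1.2)))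

def constrFun (p : Pspace m) : Bil (m+1) × Bil (m+1) :=
  (mkBil (m+1) (MS p), mkBil (m+1) (MC p))

lemma constr_coord {B : Bil (m+1) × Bil (m+1)} (hB : B ∈ kerTau1 (m+1)) :
    constrFun (coordFun B) = B := by
  obtain ⟨c0, c1, c2, c3, c4⟩ := hB
  have E : ∀ i j : Fin (m+1),
      B.1 (bV (m+1) (Sum.inr i)) (bV (m+1) (Sum.inl j))
        - B.1 (bV (m+1) (Sum.inl j)) (bV (m+1) (Sum.inr i))
        - B.1 (bV (m+1) (Sum.inr j)) (bV (m+1) (Sum.inl i))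
        + B.1 (bV (m+1) (Sum.inl i)) (bV (m+1) (Sum.inr j)) = 0 := by
    intro i j
    have := c1 (bV (m+1) (Sum.inl i)) (bV (m+1) (Sum.inl j))
    rwa [J_bV_inl, J_bV_inl, Ph_bV_inl, Ph_bV_inl] at this
  have Z : ∀ a, B.1 (bV (m+1) a) (bV (m+1) (Sum.inl (Fin.last m))) = 0 := by
    intro a
    have := c2 (bV (m+1) a)
    rwa [Svec_eq] at this
  have C3 : ∀ a (j : Fin (m+1)),
      B.1 (bV (m+1) a) (bV (m+1) (Sum.inr j)) + B.2 (bV (m+1) a) (bV (m+1) (Sum.inr j))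
        = 0 := by
    intro a j
    have := c3 (bV (m+1) a) (bV (m+1) (Sum.inl j))
    rwa [J_bV_inl] at this
  apply Prod.ext
  · -- B_S component
    apply bil_ext
    intro a b
    show mkBil (m+1) (MS (coordFun B)) (bV (m+1) a) (bV (m+1) b) = B.1 (bV (m+1) a) (bV (m+1) b)
    rw [mkBil_bV]
    cases a with
    | inl i =>
      cases b with
      | inl j =>
        show (if hj : (j : ℕ) < m then (coordFun B).2.1 i ⟨j, hj⟩ else 0) = _
        split_ifs with hj
        · show B.1 (bV (m+1) (Sum.inl i))
            (bV (m+1) (Sum.inl (Fin.castSucc ⟨(j : ℕ), hj⟩))) = _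
          have e2 : Fin.castSucc (⟨(j : ℕ), hj⟩ : Fin m) = j := Fin.ext (by simp)
          rw [e2]
        · have hjl : j = Fin.last m := Fin.ext (by have := j.isLt; simp only [Fin.val_last]; omega)
          subst hjl
          exact (Z (Sum.inl i)).symm
      | inr j => rfl
    | inr i =>
      cases b with
      | inl j =>
        show wfn m (coordFun B).1 (coordFun B).2.2.1 i j = _
        have hi1 := i.isLt
        have hj1 := j.isLt
        by_cases hj : (j : ℕ) < m
        · by_cases hi : (i : ℕ) < m
          · rw [wfn, dif_pos hj, dif_pos hi]
            by_cases hij : (i : ℕ) ≤ (j : ℕ)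
            · rw [dif_pos hij]
              show B.1 (bV (m+1) (Sum.inr (Fin.castSucc ⟨(i : ℕ), hi⟩)))
                (bV (m+1) (Sum.inl (Fin.castSucc ⟨(j : ℕ), hj⟩))) = _
              have e1 : Fin.castSucc (⟨(i : ℕ), hi⟩ : Fin m) = i := Fin.ext (by simp)
              have e2 : Fin.castSucc (⟨(j : ℕ), hj⟩ : Fin m) = j := Fin.ext (by simp)
              rw [e1, e2]
            · rw [dif_neg hij]
              show B.1 (bV (m+1) (Sum.inr (Fin.castSucc ⟨(j : ℕ), hj⟩)))
                  (bV (m+1) (Sum.inl (Fin.castSucc ⟨(i : ℕ), hi⟩)))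
                + B.1 (bV (m+1) (Sum.inl j)) (bV (m+1) (Sum.inr i))
                - B.1 (bV (m+1) (Sum.inl i)) (bV (m+1) (Sum.inr j)) = _
              have e1 : Fin.castSucc (⟨(i : ℕ), hi⟩ : Fin m) = i := Fin.ext (by simp)
              have e2 : Fin.castSucc (⟨(j : ℕ), hj⟩ : Fin m) = j := Fin.ext (by simp)
              rw [e1, e2]
              have := E i j
              linarith
          · have hil : i = Fin.last m := Fin.ext (by simp only [Fin.val_last]; omega)
            subst hil
            rw [wfn, dif_pos hj, dif_neg (by simp)]
            show B.1 (bV (m+1) (Sum.inl j)) (bV (m+1) (Sum.inr (Fin.last m)))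
              - B.1 (bV (m+1) (Sum.inl (Fin.last m))) (bV (m+1) (Sum.inr j)) = _
            have h1 := E j (Fin.last m)
            have h2 := Z (Sum.inr j)
            linarith
        · have hjl : j = Fin.last m := Fin.ext (by simp only [Fin.val_last]; omega)
          subst hjl
          rw [wfn, dif_neg (by simp)]
          exact (Z (Sum.inr i)).symm
      | inr j =>
        show symf (coordFun B).2.2.2.1 i j = _
        rw [symf]
        split_ifs with hij
        · rfl
        · show B.1 (bV (m+1) (Sum.inr j)) (bV (m+1) (Sum.inr i)) = _
          have h1 := C3 (Sum.inr i) j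
          have h2 := C3 (Sum.inr j) i
          have h3 := c0 (bV (m+1) (Sum.inr i)) (bV (m+1) (Sum.inr j))
          linarith
  · -- B_C component
    apply bil_ext
    intro a b
    show mkBil (m+1) (MC (coordFun B)) (bV (m+1) a) (bV (m+1) b) = B.2 (bV (m+1) a) (bV (m+1) b)
    rw [mkBil_bV]
    cases a with
    | inl i =>
      cases b with
      | inl j =>
        show symf (coordFun B).2.2.2.2 i j = _
        rw [symf]
        split_ifs with hij
        · rfl
        · exact c0 (bV (m+1) (Sum.inl j)) (bV (m+1) (Sum.inl i))
      | inr j =>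
        show - B.1 (bV (m+1) (Sum.inl i)) (bV (m+1) (Sum.inr j)) = _
        have := C3 (Sum.inl i) j
        linarith
    | inr i =>
      cases b with
      | inl j =>
        show - B.1 (bV (m+1) (Sum.inl j)) (bV (m+1) (Sum.inr i)) = _
        have h1 := C3 (Sum.inl j) i
        have h2 := c0 (bV (m+1) (Sum.inr i)) (bV (m+1) (Sum.inl j))
        linarith
      | inr j =>
        show - symf (coordFun B).2.2.2.1 i j = _
        rw [symf]
        split_ifs with hij
        · show - B.1 (bV (m+1) (Sum.inr i)) (bV (m+1) (Sum.inr j)) = _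
          have := C3 (Sum.inr i) j
          linarith
        · show - B.1 (bV (m+1) (Sum.inr j)) (bV (m+1) (Sum.inr i)) = _
          have h1 := C3 (Sum.inr j) i
          have h2 := c0 (bV (m+1) (Sum.inr i)) (bV (m+1) (Sum.inr j))
          linarith

lemma coord_constr (p : Pspace m) : coordFun (constrFun p) = p := by
  obtain ⟨h, a, s, t, g⟩ := p
  refine Prod.ext ?_ (Prod.ext ?_ (Prod.ext ?_ (Prod.ext ?_ ?_)))
  · funext i j
    show mkBil (m+1) (MS _) (bV (m+1) (Sum.inl i)) (bV (m+1) (Sum.inr j)) = _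
    rw [mkBil_bV]
    rfl
  · funext i j
    show mkBil (m+1) (MS _) (bV (m+1) (Sum.inl i)) (bV (m+1) (Sum.inl j.castSucc)) = _
    rw [mkBil_bV]
    show (if hj : ((j.castSucc : Fin (m+1)) : ℕ) < m then a i ⟨_, hj⟩ else 0) = a i j
    rw [dif_pos (by simpa using j.isLt)]
    exact congrArg (a i) (Fin.ext (by simp))
  · funext q
    obtain ⟨⟨q1, q2⟩, hq⟩ := q
    show mkBil (m+1) (MS _) (bV (m+1) (Sum.inr q1.castSucc)) (bV (m+1) (Sum.inl q2.castSucc)) = _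
    rw [mkBil_bV]
    show wfn m h s q1.castSucc q2.castSucc = _
    rw [wfn, dif_pos (by simpa using q2.isLt), dif_pos (by simpa using q1.isLt),
      dif_pos (by simpa using hq)]
    show s ⟨(⟨_, _⟩, ⟨_, _⟩), _⟩ = s ⟨(q1, q2), hq⟩
    congr 1
  · funext q
    obtain ⟨⟨q1, q2⟩, hq⟩ := q
    show mkBil (m+1) (MS _) (bV (m+1) (Sum.inr q1)) (bV (m+1) (Sum.inr q2)) = _
    rw [mkBil_bV]
    show symf t q1 q2 = _
    rw [symf, dif_pos (show (q1 : ℕ) ≤ (q2 : ℕ) from hq)]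
  · funext q
    obtain ⟨⟨q1, q2⟩, hq⟩ := q
    show mkBil (m+1) (MC _) (bV (m+1) (Sum.inl q1)) (bV (m+1) (Sum.inl q2)) = _
    rw [mkBil_bV]
    show symf g q1 q2 = _
    rw [symf, dif_pos (show (q1 : ℕ) ≤ (q2 : ℕ) from hq)]

def EK (m : ℕ) : kerTau1 (m+1) ≃ₗ[ℝ] Pspace m where
  toFun B := coordFun B.1
  map_add' A B := rfl
  map_smul' c A := rfl
  invFun p := ⟨constrFun p, mem_ker p⟩
  left_inv B := Subtype.ext (constr_coord B.2)
  right_inv p := coord_constr p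

end KTaux

/-- the kernel of `τ₁` has dimension `(7n² − n)/2`. -/
theorem dim_kerTau1 (n : ℕ) (hn : 1 ≤ n) :
    Module.finrank ℝ (kerTau1 n) = (7 * n ^ 2 - n) / 2 := by
  obtain ⟨m, rfl⟩ : ∃ m, n = m + 1 := ⟨n - 1, by omega⟩
  rw [(KTaux.EK m).finrank_eq]
  have cardIdx : ∀ k : ℕ, Fintype.card (KTaux.Idx k) = (k + 1) * k / 2 := by
    intro k
    have h1 : Fintype.card (KTaux.Idx k) = Fintype.card (Sym2 (Fin k)) :=
      Fintype.card_congr Sym2.sortEquiv.symm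
    rw [h1, Sym2.card]
    simp [Nat.choose_two_right]
  have hfun : ∀ k l : ℕ, Module.finrank ℝ (Fin k → Fin l → ℝ) = k * l := by
    intro k l
    simp [Module.finrank_pi_fintype, Module.finrank_fintype_fun_eq_card, Finset.sum_const,
      mul_comm]
  have hIdx : ∀ k : ℕ, Module.finrank ℝ (KTaux.Idx k → ℝ) = (k + 1) * k / 2 := by
    intro k
    rw [Module.finrank_fintype_fun_eq_card, cardIdx]
  rw [show Module.finrank ℝ (KTaux.Pspace m)
      = Module.finrank ℝ (Fin (m+1) → Fin (m+1) → ℝ)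
        + (Module.finrank ℝ (Fin (m+1) → Fin m → ℝ)
        + (Module.finrank ℝ (KTaux.Idx m → ℝ)
        + (Module.finrank ℝ (KTaux.Idx (m+1) → ℝ) + Module.finrank ℝ (KTaux.Idx (m+1) → ℝ)))) from by
    rw [Module.finrank_prod, Module.finrank_prod, Module.finrank_prod, Module.finrank_prod]]
  rw [hfun, hfun, hIdx, hIdx]
  obtain ⟨c, hc⟩ := Nat.even_mul_succ_self m
  have hmm : m * (m + 1) = m * m + m := by ring
  have hc' : m * m + m = 2 * c := by rw [← hmm, hc]; ring
  have p1 : (m + 1) * (m + 1) = m * m + 2 * m + 1 := by ring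
  have p2 : (m + 1) * m = m * m + m := by ring
  have p3 : (m + 1 + 1) * (m + 1) = m * m + 3 * m + 2 := by ring
  have p4 : 7 * (m + 1) ^ 2 = 7 * (m * m) + 14 * m + 7 := by ring
  rw [p1, p2, p3, p4]
  generalize m * m = N at hc' ⊢
  omega
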